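/- Let μ₁, μ₂, μ₃ be real numbers with μ₁ irrational, and let 0 < η < 1/4. Then for all sufficiently large real numbers N, the Lebesgue measure of Z(N) is strictly greater than N/2. -/

import Mathlib

open MeasureTheory ENNReal

/-- **Unrepresentation for three shifted cubes.**
If `μ₁` is irrational and `0 < η < 1/4`, then for all sufficiently large `N`
the set `Z(N)` of `τ ∈ [0, N]` not approximable within `η` by
`F(x) = (x₁-μ₁)³ + (x₂-μ₂)³ + (x₃-μ₃)³` with integers `xᵢ > μᵢ` has
Lebesgue measure greater than `N/2`. -/
theorem sums_of_shifted_cubes_lower_density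
    (μ : Fin 3 → ℝ) (hμ : Irrational (μ 0))
    (η : ℝ) (hη0 : 0 < η) (hη : η < 1/4) :
    ∃ N₀ : ℝ, ∀ N : ℝ, N₀ ≤ N →
      N / 2 < (volume {τ : ℝ | τ ∈ Set.Icc (0 : ℝ) N ∧
        ¬ ∃ x : Fin 3 → ℤ, (∀ i, μ i < (x i : ℝ)) ∧
          |(∑ i, ((x i : ℝ) - μ i) ^ 3) - τ| < η}).toReal := by
  set δ : ℝ := 1/2 - 2*η with hδdef
  have hδ : 0 < δ := by simp only [hδdef]; linarith
  set ε : ℝ := δ/8 with hεdef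
  have hε : 0 < ε := by positivity
  refine ⟨max 1 (4/ε^3), fun N hN => ?_⟩
  have hN1 : (1:ℝ) ≤ N := le_trans (le_max_left _ _) hN
  have hN2 : 4/ε^3 ≤ N := le_trans (le_max_right _ _) hN
  set c : ℝ := (N+1) ^ ((1:ℝ)/3) with hcdef
  have hc0 : 0 < c := Real.rpow_pos_of_pos (by linarith) _
  have hc1 : 1 ≤ c := Real.one_le_rpow (by linarith) (by norm_num)
  have hc3 : c ^ 3 = N + 1 := by
    rw [hcdef, ← Real.rpow_natCast ((N+1) ^ ((1:ℝ)/3)) 3,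
      ← Real.rpow_mul (by linarith)]
    norm_num
  -- c² ≤ ε N
  have hc2 : c ^ 2 ≤ ε * N := by
    have h1 : (c^2)^3 ≤ (ε*N)^3 := by
      have e1 : (c^2)^3 = (N+1)^2 := by
        rw [show (c^2)^3 = (c^3)^2 by ring, hc3]
      have hN4 : 4 ≤ ε^3 * N := by
        rw [div_le_iff₀ (by positivity)] at hN2
        linarith [hN2]
      calc (c^2)^3 = (N+1)^2 := e1
        _ ≤ (2*N)^2 := by nlinarith
        _ = 4*N^2 := by ring
        _ ≤ (ε^3*N)*N^2 := by nlinarith [sq_nonneg N]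
        _ = (ε*N)^3 := by ring
    exact le_of_pow_le_pow_left₀ (by norm_num) (by positivity) h1
  -- the finite set of candidate integer triples
  set S : Finset (Fin 3 → ℤ) :=
    Fintype.piFinset (fun i => Finset.Icc (⌊μ i⌋ + 1) ⌊μ i + c⌋) with hSdef
  set F : (Fin 3 → ℤ) → ℝ := fun x => ∑ i, ((x i : ℝ) - μ i) ^ 3 with hFdef
  set Z : Set ℝ := {τ : ℝ | τ ∈ Set.Icc (0 : ℝ) N ∧
        ¬ ∃ x : Fin 3 → ℤ, (∀ i, μ i < (x i : ℝ)) ∧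
          |(∑ i, ((x i : ℝ) - μ i) ^ 3) - τ| < η} with hZdef
  set U : Set ℝ := ⋃ x ∈ S, Set.Ioo (F x - η) (F x + η) with hUdef
  -- covering claim
  have hcover : Set.Icc (0:ℝ) N ⊆ Z ∪ U := by
    intro τ hτ
    by_cases h : ∃ x : Fin 3 → ℤ, (∀ i, μ i < (x i : ℝ)) ∧
        |(∑ i, ((x i : ℝ) - μ i) ^ 3) - τ| < η
    · right
      obtain ⟨x, hx, hFx⟩ := h
      have hterm : ∀ i, 0 ≤ ((x i : ℝ) - μ i) ^ 3 := fun i =>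
        pow_nonneg (by linarith [hx i]) 3
      have hFle : F x ≤ N + 1 := by
        have h1 : |F x - τ| < η := hFx
        rw [abs_sub_lt_iff] at h1
        have := hτ.2
        simp only [hFdef]
        linarith [h1.1]
      have hmem : x ∈ S := by
        rw [hSdef, Fintype.mem_piFinset]
        intro i
        rw [Finset.mem_Icc]
        constructor
        · have : (⌊μ i⌋ : ℝ) < (x i : ℝ) := lt_of_le_of_lt (Int.floor_le _) (hx i)
          exact_mod_cast Int.add_one_le_iff.mpr (by exact_mod_cast this)
        · rw [Int.le_floor]
          have hcube : ((x i : ℝ) - μ i) ^ 3 ≤ c ^ 3 := by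
            rw [hc3]
            calc ((x i : ℝ) - μ i) ^ 3
                ≤ ∑ j, ((x j : ℝ) - μ j) ^ 3 :=
                  Finset.single_le_sum (fun j _ => hterm j) (Finset.mem_univ i)
              _ ≤ N + 1 := hFle
          have : (x i : ℝ) - μ i ≤ c :=
            le_of_pow_le_pow_left₀ (by norm_num) hc0.le hcube
          push_cast
          linarith
      refine Set.mem_biUnion hmem ?_
      rw [abs_sub_lt_iff] at hFx
      exact ⟨by simp only [hFdef]; linarith [hFx.2], by simp only [hFdef]; linarith [hFx.1]⟩
    · left
      exact ⟨hτ, h⟩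
  -- measure of U
  have hUvol : volume U ≤ (S.card : ℝ≥0∞) * ENNReal.ofReal (2*η) := by
    calc volume U ≤ ∑ x ∈ S, volume (Set.Ioo (F x - η) (F x + η)) :=
          measure_biUnion_finset_le S _
      _ = ∑ x ∈ S, ENNReal.ofReal (2*η) := by
          refine Finset.sum_congr rfl fun x _ => ?_
          rw [Real.volume_Ioo]
          congr 1
          ring
      _ = (S.card : ℝ≥0∞) * ENNReal.ofReal (2*η) := by
          rw [Finset.sum_const, nsmul_eq_mul]
  -- cardinality bound
  have hcard : (S.card : ℝ) ≤ (c + 1)^3 := by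
    have h1 : S.card = ∏ i, (Finset.Icc (⌊μ i⌋ + 1) ⌊μ i + c⌋).card := by
      rw [hSdef, Fintype.card_piFinset]
    have h2 : ∀ i : Fin 3, ((Finset.Icc (⌊μ i⌋ + 1) ⌊μ i + c⌋).card : ℝ) ≤ c + 1 := by
      intro i
      rw [Int.card_Icc]
      rcases le_or_gt (⌊μ i + c⌋ + 1 - (⌊μ i⌋ + 1)) 0 with h | h
      · rw [Int.toNat_of_nonpos h]
        norm_num; linarith
      · have := Int.toNat_of_nonneg h.le
        have hf1 : (⌊μ i + c⌋ : ℝ) ≤ μ i + c := Int.floor_le _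
        have hf2 : μ i - 1 < (⌊μ i⌋ : ℝ) := Int.sub_one_lt_floor _
        have : (((⌊μ i + c⌋ + 1 - (⌊μ i⌋ + 1)).toNat : ℤ) : ℝ) = ((⌊μ i + c⌋ : ℝ) - ⌊μ i⌋) := by
          rw [this]; push_cast; ring
        push_cast at this ⊢
        rw [this]
        linarith
    calc (S.card : ℝ) = ∏ i : Fin 3, ((Finset.Icc (⌊μ i⌋ + 1) ⌊μ i + c⌋).card : ℝ) := by
          rw [h1]; push_cast; rfl
      _ ≤ ∏ _i : Fin 3, (c + 1) :=
          Finset.prod_le_prod (fun i _ => Nat.cast_nonneg _) (fun i _ => h2 i)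
      _ = (c + 1)^3 := by rw [Finset.prod_const, Finset.card_univ, Fintype.card_fin]
  -- put it together in ℝ≥0∞
  have hZsub : Z ⊆ Set.Icc (0:ℝ) N := fun τ hτ => hτ.1
  have hZfin : volume Z ≠ ⊤ := by
    have : volume Z ≤ volume (Set.Icc (0:ℝ) N) := measure_mono hZsub
    rw [Real.volume_Icc] at this
    exact ne_top_of_le_ne_top ENNReal.ofReal_ne_top this
  have hmain : ENNReal.ofReal N ≤ volume Z + (S.card : ℝ≥0∞) * ENNReal.ofReal (2*η) := by
    calc ENNReal.ofReal N = volume (Set.Icc (0:ℝ) N) := by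
          rw [Real.volume_Icc]; norm_num
      _ ≤ volume (Z ∪ U) := measure_mono hcover
      _ ≤ volume Z + volume U := measure_union_le _ _
      _ ≤ volume Z + (S.card : ℝ≥0∞) * ENNReal.ofReal (2*η) := by
          exact add_le_add_right hUvol _
  -- convert to reals
  have hreal : N ≤ (volume Z).toReal + (S.card : ℝ) * (2*η) := by
    have hfin2 : (S.card : ℝ≥0∞) * ENNReal.ofReal (2*η) ≠ ⊤ :=
      ENNReal.mul_ne_top (ENNReal.natCast_ne_top _) ENNReal.ofReal_ne_top
    have := ENNReal.toReal_mono (ENNReal.add_ne_top.mpr ⟨hZfin, hfin2⟩) hmain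
    rw [ENNReal.toReal_ofReal (by linarith), ENNReal.toReal_add hZfin hfin2,
      ENNReal.toReal_mul, ENNReal.toReal_ofReal (by linarith),
      ENNReal.toReal_natCast] at this
    exact this
  -- final arithmetic
  have hbound : (S.card : ℝ) * (2*η) ≤ (c+1)^3 * (2*η) :=
    mul_le_mul_of_nonneg_right hcard (by linarith)
  have hfinal : (c+1)^3 * (2*η) < N / 2 := by
    have hexp : (c+1)^3 = N + 2 + 3*c^2 + 3*c := by
      have : (c+1)^3 = c^3 + 3*c^2 + 3*c + 1 := by ring
      rw [this, hc3]; ring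
    have hcc : c ≤ c^2 := by nlinarith
    rw [hexp]
    have hεN : ε * N = δ/8 * N := by rw [hεdef]
    nlinarith [hc2, hδ, hN1, hη0, mul_pos hδ (lt_of_lt_of_le one_pos hN1)]
  show N / 2 < (volume Z).toReal
  linarith
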